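/- Let P and p be distinct odd primes, r a positive integer with p ∤ r, and α ≥ 1 an integer. Then Σ_{a=0}^{p^α − 1} (a | p^α)·(a·r² − 4P | p^α) = −p^{α−1} if α is odd, and = p^{α−1}(p − 2) if α is even, where (· | p^α) is the Jacobi symbol. -/

import Mathlib

open Finset

private lemma sum_range_mul_pd {p : ℕ} [NeZero p] (G : ZMod p → ℤ) (n : ℕ) :
    ∑ a ∈ Finset.range (n * p), G ((a : ℕ) : ZMod p) = n * ∑ x : ZMod p, G x := by
  induction n with
  | zero => simp
  | succ n ih =>
      rw [add_mul, one_mul, Finset.sum_range_add, ih]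
      have h2 : ∀ x ∈ Finset.range p, G ((n * p + x : ℕ) : ZMod p) = G ((x : ℕ) : ZMod p) := by
        intro x _
        congr 1
        push_cast [ZMod.natCast_self]
        ring
      rw [Finset.sum_congr rfl h2]
      have h3 : ∑ x ∈ Finset.range p, G ((x : ℕ) : ZMod p) = ∑ x : ZMod p, G x := by
        apply Finset.sum_nbij' (i := fun a : ℕ => ((a : ℕ) : ZMod p)) (j := fun x : ZMod p => x.val)
        · intro a _; exact Finset.mem_univ _
        · intro x _; exact Finset.mem_range.mpr (ZMod.val_lt x)
        · intro a ha; exact ZMod.val_cast_of_lt (Finset.mem_range.mp ha)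
        · intro x _; exact ZMod.natCast_rightInverse x
        · intro a _; rfl
      rw [h3]
      push_cast
      ring

private lemma inner_sum_odd {p : ℕ} [Fact p.Prime] (hp2 : ringChar (ZMod p) ≠ 2)
    {b c : ZMod p} (hb : IsSquare b) (hb0 : b ≠ 0) (hc : c ≠ 0) :
    ∑ x : ZMod p, (quadraticChar (ZMod p)) x * (quadraticChar (ZMod p)) (x * b + c) = -1 := by
  have h1 : ∑ x : ZMod p, (quadraticChar (ZMod p)) x * (quadraticChar (ZMod p)) (x * b + c)
      = ∑ x ∈ Finset.univ \ {(0 : ZMod p)},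
          (quadraticChar (ZMod p)) x * (quadraticChar (ZMod p)) (x * b + c) := by
    rw [Finset.sum_eq_sum_sdiff_singleton_add (Finset.mem_univ (0 : ZMod p))]
    simp
  have h2 : ∀ x ∈ Finset.univ \ {(0 : ZMod p)},
      (quadraticChar (ZMod p)) x * (quadraticChar (ZMod p)) (x * b + c)
        = (quadraticChar (ZMod p)) (b + c * x⁻¹) := by
    intro x hx
    have hx0 : x ≠ 0 := by simpa using hx
    rw [← map_mul]
    have hxe : x * (x * b + c) = x ^ 2 * (b + c * x⁻¹) := by
      field_simp
    rw [hxe, map_mul, quadraticChar_sq_one' hx0, one_mul]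
  have h3 : ∑ x ∈ Finset.univ \ {(0 : ZMod p)}, (quadraticChar (ZMod p)) (b + c * x⁻¹)
      = ∑ y ∈ Finset.univ \ {b}, (quadraticChar (ZMod p)) y := by
    apply Finset.sum_nbij' (i := fun x : ZMod p => b + c * x⁻¹)
      (j := fun y : ZMod p => c * (y - b)⁻¹)
    · intro x hx
      have hx0 : x ≠ 0 := by simpa using hx
      simp only [Finset.mem_sdiff, Finset.mem_univ, Finset.mem_singleton, true_and]
      intro h
      have : c * x⁻¹ = 0 := by linear_combination h
      exact hc (by
        rcases mul_eq_zero.mp this with h' | h'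
        · exact h'
        · exact absurd h' (inv_ne_zero hx0))
    · intro y hy
      have hy0 : y ≠ b := by simpa using hy
      simp only [Finset.mem_sdiff, Finset.mem_univ, Finset.mem_singleton, true_and]
      exact mul_ne_zero hc (inv_ne_zero (sub_ne_zero.mpr hy0))
    · intro x hx
      have hx0 : x ≠ 0 := by simpa using hx
      have he : b + c * x⁻¹ - b = c * x⁻¹ := by ring
      show c * (b + c * x⁻¹ - b)⁻¹ = x
      rw [he]
      field_simp
    · intro y hy
      have hy0 : y ≠ b := by simpa using hy
      have : y - b ≠ 0 := sub_ne_zero.mpr hy0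
      field_simp
      ring
    · intro x _; rfl
  have h4 : ∑ y ∈ Finset.univ \ {b}, (quadraticChar (ZMod p)) y
      = - (quadraticChar (ZMod p)) b := by
    have := Finset.sum_eq_sum_sdiff_singleton_add (Finset.mem_univ b)
      (fun y => (quadraticChar (ZMod p)) y)
    rw [quadraticChar_sum_zero hp2] at this
    linarith
  rw [h1, Finset.sum_congr rfl h2, h3, h4, (quadraticChar_one_iff_isSquare hb0).mpr hb]

private lemma inner_sum_even {p : ℕ} [Fact p.Prime] {b c : ZMod p} (hb0 : b ≠ 0) (hc : c ≠ 0)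
    {α : ℕ} (hα : 1 ≤ α) (hαe : ¬ Odd α) :
    ∑ x : ZMod p, ((quadraticChar (ZMod p)) x * (quadraticChar (ZMod p)) (x * b + c)) ^ α
      = (p : ℤ) - 2 := by
  set x₀ : ZMod p := -c * b⁻¹ with hx₀
  have hx₀0 : x₀ ≠ 0 := mul_ne_zero (neg_ne_zero.mpr hc) (inv_ne_zero hb0)
  have hroot : ∀ x : ZMod p, x * b + c = 0 ↔ x = x₀ := by
    intro x
    constructor
    · intro h
      rw [hx₀, eq_mul_inv_iff_mul_eq₀ hb0]
      linear_combination h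
    · intro h
      rw [h, hx₀]
      field_simp
      ring
  obtain ⟨k, hk'⟩ := Nat.not_odd_iff_even.mp hαe
  have hk : α = 2 * k := by omega
  have hpt : ∀ x : ZMod p,
      ((quadraticChar (ZMod p)) x * (quadraticChar (ZMod p)) (x * b + c)) ^ α
        = if x = 0 ∨ x = x₀ then 0 else 1 := by
    intro x
    by_cases hx : x = 0 ∨ x = x₀
    · rw [if_pos hx]
      rcases hx with rfl | rfl
      · rw [quadraticChar_zero, zero_mul, zero_pow (by omega)]
      · rw [(hroot x₀).mpr rfl, quadraticChar_zero, mul_zero, zero_pow (by omega)]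
    · rw [if_neg hx]
      push_neg at hx
      have h1 : x ≠ 0 := hx.1
      have h2 : x * b + c ≠ 0 := fun h => hx.2 ((hroot x).mp h)
      have hsq : ((quadraticChar (ZMod p)) x * (quadraticChar (ZMod p)) (x * b + c)) ^ 2 = 1 := by
        rw [mul_pow, quadraticChar_sq_one h1, quadraticChar_sq_one h2, mul_one]
      rw [hk, pow_mul, hsq, one_pow]
  rw [Finset.sum_congr rfl (fun x _ => hpt x)]
  have hset : (Finset.univ.filter fun x : ZMod p => ¬ (x = 0 ∨ x = x₀))
      = Finset.univ \ {0, x₀} := by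
    ext x
    simp [not_or]
  rw [Finset.sum_ite, Finset.sum_const_zero, Finset.sum_const, zero_add, nsmul_eq_mul, mul_one,
    hset, Finset.card_sdiff_of_subset (Finset.subset_univ _)]
  have hcard2 : ({0, x₀} : Finset (ZMod p)).card = 2 :=
    Finset.card_pair (Ne.symm hx₀0)
  rw [hcard2, Finset.card_univ, ZMod.card]
  have hp2 : 2 ≤ p := (Fact.out : p.Prime).two_le
  push_cast [Nat.cast_sub hp2]
  ring

theorem stmt5 (P p r α : ℕ) (hP : P.Prime) (hp : p.Prime) (hPodd : Odd P) (hpodd : Odd p)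
    (hne : P ≠ p) (hr : 0 < r) (hpr : ¬ p ∣ r) (hα : 1 ≤ α) :
    (∑ a ∈ Finset.range (p ^ α),
        jacobiSym (a : ℤ) (p ^ α) * jacobiSym ((a : ℤ) * (r : ℤ) ^ 2 - 4 * (P : ℤ)) (p ^ α)) =
      if Odd α then -((p : ℤ) ^ (α - 1)) else (p : ℤ) ^ (α - 1) * ((p : ℤ) - 2) := by
  haveI : Fact p.Prime := ⟨hp⟩
  haveI : NeZero p := ⟨hp.pos.ne'⟩
  have hp2 : p ≠ 2 := by
    rintro rfl
    exact (Nat.not_odd_iff_even.mpr even_two) hpodd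
  have hchar : ringChar (ZMod p) ≠ 2 := by
    rw [ZMod.ringChar_zmod_n]; exact hp2
  set b : ZMod p := ((r : ZMod p)) ^ 2 with hbdef
  set c : ZMod p := -(4 * (P : ZMod p)) with hcdef
  have hr0 : (r : ZMod p) ≠ 0 := fun h => hpr ((ZMod.natCast_eq_zero_iff r p).mp h)
  have hb0 : b ≠ 0 := pow_ne_zero 2 hr0
  have hbsq : IsSquare b := ⟨(r : ZMod p), sq (r : ZMod p)⟩
  have hP0 : (P : ZMod p) ≠ 0 := by
    intro h
    have hd : p ∣ P := (ZMod.natCast_eq_zero_iff P p).mp h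
    exact hne ((Nat.prime_dvd_prime_iff_eq hp hP).mp hd).symm
  have h40 : (4 : ZMod p) ≠ 0 := by
    intro h
    have : ((4 : ℕ) : ZMod p) = 0 := by push_cast; exact h
    have hd : p ∣ 4 := (ZMod.natCast_eq_zero_iff 4 p).mp this
    have hle : p ≤ 4 := Nat.le_of_dvd (by norm_num) hd
    have h2le : 2 ≤ p := hp.two_le
    interval_cases p
    · exact hp2 rfl
    · norm_num at hd
    · norm_num at hp
  have hc0 : c ≠ 0 := neg_ne_zero.mpr (mul_ne_zero h40 hP0)
  -- rewrite each summand
  have hterm : ∀ a ∈ Finset.range (p ^ α),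
      jacobiSym (a : ℤ) (p ^ α) * jacobiSym ((a : ℤ) * (r : ℤ) ^ 2 - 4 * (P : ℤ)) (p ^ α)
        = ((quadraticChar (ZMod p)) ((a : ℕ) : ZMod p)
            * (quadraticChar (ZMod p)) (((a : ℕ) : ZMod p) * b + c)) ^ α := by
    intro a _
    rw [jacobiSym.pow_right, jacobiSym.pow_right, ← mul_pow]
    congr 1
    rw [← jacobiSym.legendreSym.to_jacobiSym, ← jacobiSym.legendreSym.to_jacobiSym, legendreSym, legendreSym]
    congr 1
    · push_cast; ring
    · push_cast; rw [hbdef, hcdef]; congr 1; ring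
  rw [Finset.sum_congr rfl hterm]
  have hpow : p ^ α = p ^ (α - 1) * p := by
    rw [← pow_succ, Nat.sub_add_cancel hα]
  rw [hpow, sum_range_mul_pd
    (fun x : ZMod p => ((quadraticChar (ZMod p)) x * (quadraticChar (ZMod p)) (x * b + c)) ^ α)
    (p ^ (α - 1))]
  by_cases hodd : Odd α
  · rw [if_pos hodd]
    have hpt : ∀ x : ZMod p,
        ((quadraticChar (ZMod p)) x * (quadraticChar (ZMod p)) (x * b + c)) ^ α
          = (quadraticChar (ZMod p)) x * (quadraticChar (ZMod p)) (x * b + c) := by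
      intro x
      set t := (quadraticChar (ZMod p)) x * (quadraticChar (ZMod p)) (x * b + c) with ht
      have htr : t = 0 ∨ t = 1 ∨ t = -1 := by
        have h1 := quadraticChar_isQuadratic (ZMod p) x
        have h2 := quadraticChar_isQuadratic (ZMod p) (x * b + c)
        rw [ht]
        rcases h1 with h1 | h1 | h1 <;> rcases h2 with h2 | h2 | h2 <;> rw [h1, h2] <;> norm_num
      rcases htr with h | h | h <;> rw [h]
      · exact zero_pow (by omega)
      · exact one_pow α
      · exact Odd.neg_one_pow hodd
    rw [Finset.sum_congr rfl (fun x _ => hpt x), inner_sum_odd hchar hbsq hb0 hc0]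
    push_cast
    ring
  · rw [if_neg hodd, inner_sum_even hb0 hc0 hα hodd]
    push_cast
    ring
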